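/- The set identity ( 𝓘_{XY} + (−∞,0] × (−∞,0] × [0,∞) ) ∩ 𝓘ᵒ_{XY} = ( 𝓘_{XY} + { (t,t,t) : t ≤ 0 } ) ∩ ( [0,∞) × [0,∞) × ℝ ) holds, where + denotes the Minkowski sum. -/

import Mathlib

open scoped BigOperators Pointwise Classical

noncomputable section

namespace GW

/-- A probability mass function on a finite type. -/
def IsPMF {α : Type} [Fintype α] (p : α → ℝ) : Prop :=
  (∀ a, 0 ≤ p a) ∧ ∑ a, p a = 1

/-- Distribution (pmf) of the random variable `f` under the pmf `p`. -/
def dist {α β : Type} [Fintype α] (p : α → ℝ) (f : α → β) : β → ℝ :=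
  fun b => ∑ a, if f a = b then p a else 0

/-- Shannon entropy (base 2) of the random variable `f` under the pmf `p`. -/
def H {α β : Type} [Fintype α] [Fintype β] (p : α → ℝ) (f : α → β) : ℝ :=
  ∑ b, -(dist p f b * Real.logb 2 (dist p f b))

/-- Mutual information `I(f; g)` under `p`. -/
def I2 {α β γ : Type} [Fintype α] [Fintype β] [Fintype γ]
    (p : α → ℝ) (f : α → β) (g : α → γ) : ℝ :=
  H p f + H p g - H p (fun a => (f a, g a))

/-- Conditional entropy `H(f | g)` under `p`. -/
def Hc {α β γ : Type} [Fintype α] [Fintype β] [Fintype γ]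
    (p : α → ℝ) (f : α → β) (g : α → γ) : ℝ :=
  H p (fun a => (f a, g a)) - H p g

/-- Conditional mutual information `I(f; g | h)` under `p`. -/
def Ic {α β γ δ : Type} [Fintype α] [Fintype β] [Fintype γ] [Fintype δ]
    (p : α → ℝ) (f : α → β) (g : α → γ) (h : α → δ) : ℝ :=
  Hc p f h + Hc p g h - Hc p (fun a => (f a, g a)) h

/-- Independence of the random variables `f` and `g` under `p`. -/
def Indep {α β γ : Type} [Fintype α] (p : α → ℝ) (f : α → β) (g : α → γ) : Prop :=
  ∀ b c, dist p (fun a => (f a, g a)) (b, c) = dist p f b * dist p g c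

/-- `q` is a joint pmf on `X × Y × U` whose `(X,Y)`-marginal is `p`; i.e. `U` is an
auxiliary random variable defined jointly with `(X,Y)` via a conditional pmf `p_{U|XY}`. -/
def IsAux {X Y U : Type} [Fintype X] [Fintype Y] [Fintype U]
    (p : X × Y → ℝ) (q : X × Y × U → ℝ) : Prop :=
  IsPMF q ∧ ∀ x y, (∑ u, q (x, y, u)) = p (x, y)

/-- Coordinate map onto `X`. -/
def cX {X Y U : Type} : X × Y × U → X := fun a => a.1
/-- Coordinate map onto `Y`. -/
def cY {X Y U : Type} : X × Y × U → Y := fun a => a.2.1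
/-- Coordinate map onto `U`. -/
def cU {X Y U : Type} : X × Y × U → U := fun a => a.2.2
/-- Coordinate map onto `X × Y`. -/
def cXY {X Y U : Type} : X × Y × U → X × Y := fun a => (a.1, a.2.1)

/-- The mutual information region `𝓘_{XY}`. -/
def MIRegion {X Y : Type} [Fintype X] [Fintype Y] (p : X × Y → ℝ) : Set (ℝ × ℝ × ℝ) :=
  { v | ∃ (U : Type) (_ : Fintype U) (q : X × Y × U → ℝ), IsAux p q ∧
      v = (I2 q cX cU, I2 q cY cU, I2 q cXY cU) }

/-- The outer region `𝓘ᵒ_{XY}`. -/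
def OuterRegion {X Y : Type} [Fintype X] [Fintype Y] (p : X × Y → ℝ) : Set (ℝ × ℝ × ℝ) :=
  { v | 0 ≤ v.1 ∧ 0 ≤ v.2.1 ∧ v.1 + v.2.1 - v.2.2 ≤ I2 p Prod.fst Prod.snd ∧
        0 ≤ v.2.2 - v.2.1 ∧ v.2.2 - v.2.1 ≤ Hc p Prod.fst Prod.snd ∧
        0 ≤ v.2.2 - v.1 ∧ v.2.2 - v.1 ≤ Hc p Prod.snd Prod.fst }



set_option linter.unusedSectionVars false
set_option maxHeartbeats 1000000

/-- natural-log entropy of a raw distribution -/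
def ent {β : Type} [Fintype β] (d : β → ℝ) : ℝ := ∑ b, -(d b * Real.log (d b))

variable {α β γ δ : Type} [Fintype α] [Fintype β] [Fintype γ] [Fintype δ]

lemma H_eq_ent (p : α → ℝ) (f : α → β) : H p f = ent (dist p f) / Real.log 2 := by
  rw [H, ent, Finset.sum_div]
  refine Finset.sum_congr rfl fun b _ => ?_
  rw [Real.logb, neg_div, mul_div_assoc]

lemma dist_nonneg {p : α → ℝ} (hp : ∀ a, 0 ≤ p a) (f : α → β) (b : β) : 0 ≤ dist p f b := by
  refine Finset.sum_nonneg fun a _ => ?_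
  split <;> simp [hp a]

lemma sum_dist (p : α → ℝ) (f : α → β) : ∑ b, dist p f b = ∑ a, p a := by
  simp only [dist]
  rw [Finset.sum_comm]
  refine Finset.sum_congr rfl fun a _ => ?_
  simpa using Finset.sum_ite_eq Finset.univ (f a) (fun _ => p a)

lemma dist_comp (p : α → ℝ) (f : α → β) (g : β → γ) (c : γ) :
    dist p (fun a => g (f a)) c = ∑ b, if g b = c then dist p f b else 0 := by
  simp only [dist]
  have key : ∀ b : β, (if g b = c then (∑ a, if f a = b then p a else 0) else 0)
      = ∑ a, if f a = b then (if g b = c then p a else 0) else 0 := by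
    intro b
    by_cases h1 : g b = c <;> simp [h1]
  rw [Finset.sum_congr rfl fun b _ => key b, Finset.sum_comm]
  refine Finset.sum_congr rfl fun a _ => ?_
  simpa using Finset.sum_ite_eq Finset.univ (f a) (fun b => if g b = c then p a else 0)

lemma dist_fst (p : α → ℝ) (f : α → β) (g : α → γ) (b : β) :
    dist p f b = ∑ c, dist p (fun a => (f a, g a)) (b, c) := by
  simp only [dist, Prod.mk.injEq]
  rw [Finset.sum_comm]
  refine Finset.sum_congr rfl fun a _ => ?_
  have key : ∀ c : γ, (if f a = b ∧ g a = c then p a else 0)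
      = (if g a = c then (if f a = b then p a else 0) else 0) := by
    intro c; by_cases h1 : f a = b <;> by_cases h2 : g a = c <;> simp [h1, h2]
  rw [Finset.sum_congr rfl fun c _ => key c]
  simpa using Finset.sum_ite_eq Finset.univ (g a) (fun _ => if f a = b then p a else 0)

lemma dist_snd (p : α → ℝ) (f : α → β) (g : α → γ) (c : γ) :
    dist p g c = ∑ b, dist p (fun a => (f a, g a)) (b, c) := by
  simp only [dist, Prod.mk.injEq]
  rw [Finset.sum_comm]
  refine Finset.sum_congr rfl fun a _ => ?_
  have key : ∀ b : β, (if f a = b ∧ g a = c then p a else 0)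
      = (if f a = b then (if g a = c then p a else 0) else 0) := by
    intro b; by_cases h1 : f a = b <;> by_cases h2 : g a = c <;> simp [h1, h2]
  rw [Finset.sum_congr rfl fun b _ => key b]
  simpa using Finset.sum_ite_eq Finset.univ (f a) (fun _ => if g a = c then p a else 0)

lemma dist_comp_inj (p : α → ℝ) (f : α → β) {g : β → γ} (hg : Function.Injective g) (b : β) :
    dist p (fun a => g (f a)) (g b) = dist p f b := by
  simp only [dist, hg.eq_iff]

lemma dist_comp_not_mem (p : α → ℝ) (f : α → β) (g : β → γ) {c : γ}
    (hc : ∀ b, g b ≠ c) : dist p (fun a => g (f a)) c = 0 := by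
  simp only [dist]
  exact Finset.sum_eq_zero fun a _ => by simp [hc (f a)]

lemma ent_comp_inj (p : α → ℝ) (f : α → β) {g : β → γ} (hg : Function.Injective g) :
    ent (dist p (fun a => g (f a))) = ent (dist p f) := by
  rw [ent, ent]
  set F : γ → ℝ := fun c => -(dist p (fun a => g (f a)) c * Real.log (dist p (fun a => g (f a)) c)) with hF
  have h1 : ∑ c : γ, F c = ∑ c ∈ Finset.univ.image g, F c := by
    refine (Finset.sum_subset (Finset.subset_univ _) ?_).symm
    intro c _ hc
    rw [hF]
    simp only []
    rw [dist_comp_not_mem p f g (fun b hb => hc (by rw [← hb]; exact Finset.mem_image_of_mem g (Finset.mem_univ b)))]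
    simp
  rw [h1, Finset.sum_image (fun x _ y _ h => hg h)]
  refine Finset.sum_congr rfl fun b _ => ?_
  rw [hF]
  simp only []
  rw [dist_comp_inj p f hg]

lemma H_comp_inj (p : α → ℝ) (f : α → β) {g : β → γ} (hg : Function.Injective g) :
    H p (fun a => g (f a)) = H p f := by
  rw [H_eq_ent, H_eq_ent, ent_comp_inj p f hg]


variable {α β γ δ : Type} [Fintype α] [Fintype β] [Fintype γ] [Fintype δ]

lemma ent_eq_neg {β : Type} [Fintype β] (d : β → ℝ) : ent d = -∑ b, d b * Real.log (d b) := by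
  rw [ent, ← Finset.sum_neg_distrib]

lemma gibbs (r s : β → ℝ) (hr : ∀ b, 0 ≤ r b) (hs : ∀ b, 0 ≤ s b)
    (hsum : ∑ b, s b ≤ ∑ b, r b) (habs : ∀ b, 0 < r b → 0 < s b) :
    ∑ b, r b * Real.log (s b) ≤ ∑ b, r b * Real.log (r b) := by
  have key : ∀ b, r b * Real.log (s b) - r b * Real.log (r b) ≤ s b - r b := by
    intro b
    rcases eq_or_lt_of_le (hr b) with h | h
    · simp [← h, hs b]
    · have hsb := habs b h
      rw [← mul_sub, ← Real.log_div (ne_of_gt hsb) (ne_of_gt h)]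
      calc r b * Real.log (s b / r b) ≤ r b * (s b / r b - 1) :=
            mul_le_mul_of_nonneg_left (Real.log_le_sub_one_of_pos (div_pos hsb h)) (le_of_lt h)
        _ = s b - r b := by field_simp
  have h2 : ∑ b, (r b * Real.log (s b) - r b * Real.log (r b)) ≤ ∑ b, (s b - r b) :=
    Finset.sum_le_sum fun b _ => key b
  rw [Finset.sum_sub_distrib, Finset.sum_sub_distrib] at h2
  linarith

lemma dist_le_dist_fst {p : α → ℝ} (hp : ∀ a, 0 ≤ p a) (f : α → β) (g : α → γ) (b : β) (c : γ) :
    dist p (fun a => (f a, g a)) (b, c) ≤ dist p f b := by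
  rw [dist_fst p f g b]
  exact Finset.single_le_sum (fun c' _ => dist_nonneg hp (fun a => (f a, g a)) (b, c')) (Finset.mem_univ c)

lemma dist_le_dist_snd {p : α → ℝ} (hp : ∀ a, 0 ≤ p a) (f : α → β) (g : α → γ) (b : β) (c : γ) :
    dist p (fun a => (f a, g a)) (b, c) ≤ dist p g c := by
  rw [dist_snd p f g c]
  exact Finset.single_le_sum (fun b' _ => dist_nonneg hp (fun a => (f a, g a)) (b', c)) (Finset.mem_univ b)

/-- H(g) ≤ H(f,g) -/
lemma ent_mono {p : α → ℝ} (hp : ∀ a, 0 ≤ p a) (f : α → β) (g : α → γ) :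
    ent (dist p g) ≤ ent (dist p (fun a => (f a, g a))) := by
  rw [ent, ent, Fintype.sum_prod_type]
  rw [Finset.sum_comm]
  have step : ∀ c : γ, -(dist p g c * Real.log (dist p g c))
      = ∑ b, -(dist p (fun a => (f a, g a)) (b, c) * Real.log (dist p g c)) := by
    intro c
    rw [Finset.sum_neg_distrib, ← Finset.sum_mul, ← dist_snd p f g c]
  rw [Finset.sum_congr rfl fun c _ => step c]
  refine Finset.sum_le_sum fun c _ => Finset.sum_le_sum fun b _ => ?_
  simp only [neg_le_neg_iff]
  rcases eq_or_lt_of_le (dist_nonneg hp (fun a => (f a, g a)) (b, c)) with h | h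
  · rw [← h]; simp
  · exact mul_le_mul_of_nonneg_left
      (Real.log_le_log h (dist_le_dist_snd hp f g b c)) (le_of_lt h)

/-- H(f,g) ≤ H(f) + H(g) -/
lemma ent_subadd {p : α → ℝ} (hp : IsPMF p) (f : α → β) (g : α → γ) :
    ent (dist p (fun a => (f a, g a))) ≤ ent (dist p f) + ent (dist p g) := by
  set r : β × γ → ℝ := dist p (fun a => (f a, g a)) with hr
  set s : β × γ → ℝ := fun bc => dist p f bc.1 * dist p g bc.2 with hs
  have hrn : ∀ x, 0 ≤ r x := fun x => dist_nonneg hp.1 _ _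
  have hsn : ∀ x, 0 ≤ s x := fun x =>
    mul_nonneg (dist_nonneg hp.1 _ _) (dist_nonneg hp.1 _ _)
  have hsum : ∑ x, s x ≤ ∑ x, r x := by
    have h1 : ∑ x, s x = (∑ b, dist p f b) * (∑ c, dist p g c) := by
      rw [hs, Fintype.sum_prod_type, Finset.sum_mul_sum]
    have h2 : ∑ x, r x = ∑ a, p a := sum_dist p _
    rw [h1, h2, sum_dist p f, sum_dist p g, hp.2]
    simp
  have habs : ∀ x, 0 < r x → 0 < s x := by
    rintro ⟨b, c⟩ h
    exact mul_pos (lt_of_lt_of_le h (dist_le_dist_fst hp.1 f g b c))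
      (lt_of_lt_of_le h (dist_le_dist_snd hp.1 f g b c))
  have hgibbs := gibbs r s hrn hsn hsum habs
  have hsplit : ∑ x, r x * Real.log (s x)
      = ∑ x, r x * Real.log (dist p f x.1) + ∑ x, r x * Real.log (dist p g x.2) := by
    rw [← Finset.sum_add_distrib]
    refine Finset.sum_congr rfl fun x _ => ?_
    rcases eq_or_lt_of_le (hrn x) with h | h
    · rw [← h]; ring
    · have h1 : 0 < dist p f x.1 := lt_of_lt_of_le h (by rw [hr]; exact dist_le_dist_fst hp.1 f g x.1 x.2)
      have h2 : 0 < dist p g x.2 := lt_of_lt_of_le h (by rw [hr]; exact dist_le_dist_snd hp.1 f g x.1 x.2)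
      rw [hs]
      simp only []
      rw [Real.log_mul (ne_of_gt h1) (ne_of_gt h2), mul_add]
  have hmargf : ∑ x : β × γ, r x * Real.log (dist p f x.1) = ∑ b, dist p f b * Real.log (dist p f b) := by
    rw [Fintype.sum_prod_type]
    refine Finset.sum_congr rfl fun b _ => ?_
    dsimp only
    rw [← Finset.sum_mul, ← dist_fst p f g b]
  have hmargg : ∑ x : β × γ, r x * Real.log (dist p g x.2) = ∑ c, dist p g c * Real.log (dist p g c) := by
    rw [Fintype.sum_prod_type, Finset.sum_comm]
    refine Finset.sum_congr rfl fun c _ => ?_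
    dsimp only
    rw [← Finset.sum_mul, ← dist_snd p f g c]
  rw [ent_eq_neg, ent_eq_neg, ent_eq_neg]
  rw [hsplit, hmargf, hmargg] at hgibbs
  linarith

variable {α β γ δ : Type} [Fintype α] [Fintype β] [Fintype γ] [Fintype δ]

lemma dist3_12 (p : α → ℝ) (f : α → β) (g : α → γ) (k : α → δ) (b : β) (c : γ) :
    dist p (fun a => (f a, g a)) (b, c) = ∑ d, dist p (fun a => (f a, (g a, k a))) (b, (c, d)) := by
  simp only [dist, Prod.mk.injEq]
  rw [Finset.sum_comm]
  refine Finset.sum_congr rfl fun a _ => ?_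
  have key : ∀ d : δ, (if f a = b ∧ g a = c ∧ k a = d then p a else 0)
      = (if k a = d then (if f a = b ∧ g a = c then p a else 0) else 0) := by
    intro d
    by_cases h1 : f a = b <;> by_cases h2 : g a = c <;> by_cases h3 : k a = d <;>
      simp [h1, h2, h3]
  rw [Finset.sum_congr rfl fun d _ => key d]
  simpa using Finset.sum_ite_eq Finset.univ (k a) (fun _ => if f a = b ∧ g a = c then p a else 0)

/-- submodularity: H(g) + H(f,g,k) ≤ H(f,g) + H(g,k) -/
lemma ent_submod {p : α → ℝ} (hp : IsPMF p) (f : α → β) (g : α → γ) (k : α → δ) :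
    ent (dist p g) + ent (dist p (fun a => (f a, (g a, k a))))
      ≤ ent (dist p (fun a => (f a, g a))) + ent (dist p (fun a => (g a, k a))) := by
  set r : β × γ × δ → ℝ := dist p (fun a => (f a, (g a, k a))) with hr
  set dfg : β × γ → ℝ := dist p (fun a => (f a, g a)) with hdfg
  set dgk : γ × δ → ℝ := dist p (fun a => (g a, k a)) with hdgk
  set dg : γ → ℝ := dist p g with hdg
  have hrn : ∀ x, 0 ≤ r x := fun x => dist_nonneg hp.1 _ _
  have hdfgn : ∀ y, 0 ≤ dfg y := fun y => dist_nonneg hp.1 _ _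
  have hdgkn : ∀ y, 0 ≤ dgk y := fun y => dist_nonneg hp.1 _ _
  have hdgn : ∀ c, 0 ≤ dg c := fun c => dist_nonneg hp.1 _ _
  have m1 : ∀ b c, dfg (b, c) = ∑ d, r (b, (c, d)) := fun b c => dist3_12 p f g k b c
  have m2 : ∀ c d, dgk (c, d) = ∑ b, r (b, (c, d)) := fun c d =>
    dist_snd p f (fun a => (g a, k a)) (c, d)
  have m3 : ∀ c, dg c = ∑ b, ∑ d, r (b, (c, d)) := by
    intro c
    rw [hdg, dist_snd p f g c]
    exact Finset.sum_congr rfl fun b _ => m1 b c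
  set s : β × γ × δ → ℝ := fun x => dfg (x.1, x.2.1) * dgk x.2 / dg x.2.1 with hs
  have hsn : ∀ x, 0 ≤ s x := fun x =>
    div_nonneg (mul_nonneg (hdfgn _) (hdgkn _)) (hdgn _)
  have hdom1 : ∀ b c d, r (b, (c, d)) ≤ dfg (b, c) := by
    intro b c d
    rw [m1 b c]
    exact Finset.single_le_sum (fun d' _ => hrn (b, (c, d'))) (Finset.mem_univ d)
  have hdom2 : ∀ b c d, r (b, (c, d)) ≤ dgk (c, d) := by
    intro b c d
    rw [m2 c d]
    exact Finset.single_le_sum (fun b' _ => hrn (b', (c, d))) (Finset.mem_univ b)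
  have hdom3 : ∀ b c d, r (b, (c, d)) ≤ dg c := by
    intro b c d
    rw [m3 c]
    calc r (b, (c, d)) ≤ ∑ d', r (b, (c, d')) :=
          Finset.single_le_sum (fun d' _ => hrn (b, (c, d'))) (Finset.mem_univ d)
      _ ≤ ∑ b', ∑ d', r (b', (c, d')) :=
          Finset.single_le_sum (fun b' _ => Finset.sum_nonneg fun d' _ => hrn (b', (c, d')))
            (Finset.mem_univ b)
  have habs : ∀ x, 0 < r x → 0 < s x := by
    rintro ⟨b, c, d⟩ h
    exact div_pos (mul_pos (lt_of_lt_of_le h (hdom1 b c d)) (lt_of_lt_of_le h (hdom2 b c d)))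
      (lt_of_lt_of_le h (hdom3 b c d))
  have hsum : ∑ x, s x ≤ ∑ x, r x := by
    have e1 : ∑ x : β × γ × δ, s x = ∑ c, ((∑ b, dfg (b, c)) * (∑ d, dgk (c, d))) / dg c := by
      rw [Fintype.sum_prod_type]
      rw [Finset.sum_congr rfl fun b (_ : b ∈ Finset.univ) => Fintype.sum_prod_type
        (fun y : γ × δ => s (b, y))]
      rw [Finset.sum_comm]
      refine Finset.sum_congr rfl fun c _ => ?_
      rw [Finset.sum_mul_sum, Finset.sum_div]
      refine Finset.sum_congr rfl fun b _ => ?_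
      rw [Finset.sum_div]
    have e2 : ∀ c, (∑ b, dfg (b, c)) = dg c := by
      intro c; rw [hdg, dist_snd p f g c]
    have e3 : ∀ c, (∑ d, dgk (c, d)) = dg c := by
      intro c; rw [hdg, dist_fst p g k c]
    rw [e1]
    have : ∀ c, dg c * dg c / dg c ≤ dg c := by
      intro c
      rcases eq_or_lt_of_le (hdgn c) with h | h
      · rw [← h]; simp
      · rw [mul_div_assoc, div_self (ne_of_gt h), mul_one]
    calc ∑ c, ((∑ b, dfg (b, c)) * (∑ d, dgk (c, d))) / dg c
        = ∑ c, dg c * dg c / dg c := by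
          refine Finset.sum_congr rfl fun c _ => ?_; rw [e2 c, e3 c]
      _ ≤ ∑ c, dg c := Finset.sum_le_sum fun c _ => this c
      _ = ∑ a, p a := sum_dist p g
      _ = ∑ x, r x := (sum_dist p _).symm
  have hgibbs := gibbs r s hrn hsn hsum habs
  have hsplit : ∑ x, r x * Real.log (s x)
      = ∑ x, r x * Real.log (dfg (x.1, x.2.1)) + ∑ x, r x * Real.log (dgk x.2)
        - ∑ x, r x * Real.log (dg x.2.1) := by
    rw [← Finset.sum_add_distrib, ← Finset.sum_sub_distrib]
    refine Finset.sum_congr rfl fun x _ => ?_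
    rcases eq_or_lt_of_le (hrn x) with h | h
    · rw [← h]; ring
    · obtain ⟨b, c, d⟩ := x
      have h1 := lt_of_lt_of_le h (hdom1 b c d)
      have h2 := lt_of_lt_of_le h (hdom2 b c d)
      have h3 := lt_of_lt_of_le h (hdom3 b c d)
      rw [hs]
      dsimp only
      rw [Real.log_div (ne_of_gt (mul_pos h1 h2)) (ne_of_gt h3),
        Real.log_mul (ne_of_gt h1) (ne_of_gt h2)]
      ring
  have marg1 : ∑ x : β × γ × δ, r x * Real.log (dfg (x.1, x.2.1))
      = ∑ y : β × γ, dfg y * Real.log (dfg y) := by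
    rw [Fintype.sum_prod_type (f := fun x : β × γ × δ => r x * Real.log (dfg (x.1, x.2.1)))]
    rw [Finset.sum_congr rfl fun b (_ : b ∈ Finset.univ) => Fintype.sum_prod_type
      (fun y : γ × δ => r (b, y) * Real.log (dfg ((b, y).1, (b, y).2.1)))]
    rw [Fintype.sum_prod_type (f := fun y : β × γ => dfg y * Real.log (dfg y))]
    refine Finset.sum_congr rfl fun b _ => Finset.sum_congr rfl fun c _ => ?_
    dsimp only
    rw [← Finset.sum_mul, ← m1 b c]
  have marg2 : ∑ x : β × γ × δ, r x * Real.log (dgk x.2)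
      = ∑ y : γ × δ, dgk y * Real.log (dgk y) := by
    rw [Fintype.sum_prod_type (f := fun x : β × γ × δ => r x * Real.log (dgk x.2))]
    rw [Finset.sum_comm]
    refine Finset.sum_congr rfl fun y _ => ?_
    obtain ⟨c, d⟩ := y
    dsimp only
    rw [← Finset.sum_mul, ← m2 c d]
  have marg3 : ∑ x : β × γ × δ, r x * Real.log (dg x.2.1)
      = ∑ c : γ, dg c * Real.log (dg c) := by
    rw [Fintype.sum_prod_type (f := fun x : β × γ × δ => r x * Real.log (dg x.2.1))]
    rw [Finset.sum_congr rfl fun b (_ : b ∈ Finset.univ) => Fintype.sum_prod_type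
      (fun y : γ × δ => r (b, y) * Real.log (dg (b, y).2.1))]
    rw [Finset.sum_comm]
    refine Finset.sum_congr rfl fun c _ => ?_
    dsimp only
    calc ∑ b, ∑ d, r (b, (c, d)) * Real.log (dg c)
        = (∑ b, ∑ d, r (b, (c, d))) * Real.log (dg c) := by
          rw [Finset.sum_mul]
          exact Finset.sum_congr rfl fun b _ => by rw [Finset.sum_mul]
      _ = dg c * Real.log (dg c) := by rw [← m3 c]
  rw [ent_eq_neg, ent_eq_neg, ent_eq_neg, ent_eq_neg]
  rw [hsplit, marg1, marg2, marg3] at hgibbs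
  have : ∑ x, r x * Real.log (r x) = ∑ x : β × γ × δ, r x * Real.log (r x) := rfl
  linarith

variable {α β γ δ : Type} [Fintype α] [Fintype β] [Fintype γ] [Fintype δ]

lemma log2_pos : (0:ℝ) < Real.log 2 := Real.log_pos one_lt_two

lemma H_mono {p : α → ℝ} (hp : ∀ a, 0 ≤ p a) (f : α → β) (g : α → γ) :
    H p g ≤ H p (fun a => (f a, g a)) := by
  rw [H_eq_ent, H_eq_ent, div_le_div_iff_of_pos_right log2_pos]
  exact ent_mono hp f g

lemma H_subadd {p : α → ℝ} (hp : IsPMF p) (f : α → β) (g : α → γ) :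
    H p (fun a => (f a, g a)) ≤ H p f + H p g := by
  rw [H_eq_ent, H_eq_ent, H_eq_ent, ← add_div, div_le_div_iff_of_pos_right log2_pos]
  exact ent_subadd hp f g

lemma H_submod {p : α → ℝ} (hp : IsPMF p) (f : α → β) (g : α → γ) (k : α → δ) :
    H p g + H p (fun a => (f a, (g a, k a)))
      ≤ H p (fun a => (f a, g a)) + H p (fun a => (g a, k a)) := by
  rw [H_eq_ent, H_eq_ent, H_eq_ent, H_eq_ent, ← add_div, ← add_div,
    div_le_div_iff_of_pos_right log2_pos]
  exact ent_submod hp f g k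



section Aux
variable {X Y U : Type} [Fintype X] [Fintype Y] [Fintype U]
  {p : X × Y → ℝ} {q : X × Y × U → ℝ}

lemma aux_dist_cXY (ha : IsAux p q) (z : X × Y) : dist q cXY z = p z := by
  obtain ⟨x, y⟩ := z
  simp only [dist, cXY, Prod.mk.injEq]
  rw [Fintype.sum_prod_type]
  dsimp only
  rw [Finset.sum_congr rfl fun x1 (_ : x1 ∈ Finset.univ) => Fintype.sum_prod_type
    (fun w : Y × U => if x1 = x ∧ w.1 = y then q (x1, w) else 0)]
  dsimp only
  have step1 : ∀ x1 y', (∑ u, if x1 = x ∧ y' = y then q (x1, (y', u)) else 0)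
      = if x1 = x then (if y' = y then p (x1, y') else 0) else 0 := by
    intro x1 y'
    by_cases h1 : x1 = x <;> by_cases h2 : y' = y <;> simp [h1, h2, ha.2 x y, ha.2 x1 y']
  rw [Finset.sum_congr rfl fun x1 (_ : x1 ∈ Finset.univ) =>
    Finset.sum_congr rfl fun y' (_ : y' ∈ Finset.univ) => step1 x1 y']
  have step2 : ∀ x1, (∑ y', if x1 = x then (if y' = y then p (x1, y') else 0) else 0)
      = if x1 = x then p (x1, y) else 0 := by
    intro x1
    by_cases h1 : x1 = x <;> simp [h1]
  rw [Finset.sum_congr rfl fun x1 (_ : x1 ∈ Finset.univ) => step2 x1]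
  simp

lemma aux_H_comp (ha : IsAux p q) {β : Type} [Fintype β] (F : X × Y → β) :
    H q (fun a => F (cXY a)) = H p F := by
  have hd : ∀ c, dist q (fun a => F (cXY a)) c = dist p F c := by
    intro c
    rw [dist_comp q cXY F c]
    rw [show dist p F c = ∑ z, if F z = c then p z else 0 from rfl]
    exact Finset.sum_congr rfl fun z _ => by rw [aux_dist_cXY ha z]
  rw [H, H]
  exact Finset.sum_congr rfl fun b _ => by rw [hd b]

end Aux

section Subset
variable {X Y U : Type} [Fintype X] [Fintype Y] [Fintype U]
  {p : X × Y → ℝ} {q : X × Y × U → ℝ}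

-- identifications of entropies under injective re-associations
lemma Hq_assoc1 (q : X × Y × U → ℝ) :
    H q (fun a : X × Y × U => (cX a, (cU a, cY a))) = H q (fun a => (cXY a, cU a)) := by
  have hg : Function.Injective (fun z : (X × Y) × U => (z.1.1, (z.2, z.1.2))) := by
    rintro ⟨⟨x, y⟩, u⟩ ⟨⟨x', y'⟩, u'⟩ h
    simp only [Prod.mk.injEq] at h
    simp [h.1, h.2.1, h.2.2]
  exact H_comp_inj q (fun a => (cXY a, cU a)) hg

lemma Hq_assoc2 (q : X × Y × U → ℝ) :
    H q (fun a : X × Y × U => (cX a, (cY a, cU a))) = H q (fun a => (cXY a, cU a)) := by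
  have hg : Function.Injective (fun z : (X × Y) × U => (z.1.1, (z.1.2, z.2))) := by
    rintro ⟨⟨x, y⟩, u⟩ ⟨⟨x', y'⟩, u'⟩ h
    simp only [Prod.mk.injEq] at h
    simp [h.1, h.2.1, h.2.2]
  exact H_comp_inj q (fun a => (cXY a, cU a)) hg

lemma Hq_assoc3 (q : X × Y × U → ℝ) :
    H q (fun a : X × Y × U => (cY a, (cX a, cU a))) = H q (fun a => (cXY a, cU a)) := by
  have hg : Function.Injective (fun z : (X × Y) × U => (z.1.2, (z.1.1, z.2))) := by
    rintro ⟨⟨x, y⟩, u⟩ ⟨⟨x', y'⟩, u'⟩ h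
    simp only [Prod.mk.injEq] at h
    simp [h.1, h.2.1, h.2.2]
  exact H_comp_inj q (fun a => (cXY a, cU a)) hg

lemma Hq_swapUY (q : X × Y × U → ℝ) :
    H q (fun a : X × Y × U => (cU a, cY a)) = H q (fun a => (cY a, cU a)) := by
  have hg : Function.Injective (fun z : Y × U => (z.2, z.1)) := by
    rintro ⟨y, u⟩ ⟨y', u'⟩ h
    simp only [Prod.mk.injEq] at h
    simp [h.1, h.2]
  exact H_comp_inj q (fun a => (cY a, cU a)) hg

lemma Hq_swapYX (q : X × Y × U → ℝ) :
    H q (fun a : X × Y × U => (cY a, cX a)) = H q cXY := by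
  have hg : Function.Injective (fun z : X × Y => (z.2, z.1)) := by
    rintro ⟨x, y⟩ ⟨x', y'⟩ h
    simp only [Prod.mk.injEq] at h
    simp [h.1, h.2]
  exact H_comp_inj q cXY hg

lemma MIRegion_subset_Outer (p : X × Y → ℝ) (hp : IsPMF p) :
    MIRegion p ⊆ OuterRegion p := by
  rintro v ⟨U, _, q, ha, rfl⟩
  have hq : IsPMF q := ha.1
  have T1 : H q cX = H p Prod.fst := aux_H_comp ha Prod.fst
  have T2 : H q cY = H p Prod.snd := aux_H_comp ha Prod.snd
  have T3 : H q cXY = H p (fun z : X × Y => (Prod.fst z, Prod.snd z)) :=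
    aux_H_comp ha (fun z : X × Y => (Prod.fst z, Prod.snd z))
  -- F1, F2: subadditivity
  have F1 : H q (fun a => (cX a, cU a)) ≤ H q cX + H q cU := H_subadd hq cX cU
  have F2 : H q (fun a => (cY a, cU a)) ≤ H q cY + H q cU := H_subadd hq cY cU
  -- F3: submodularity with middle U
  have F3 : H q cU + H q (fun a => (cXY a, cU a))
      ≤ H q (fun a => (cX a, cU a)) + H q (fun a => (cY a, cU a)) := by
    have h := H_submod hq cX cU cY
    rwa [Hq_assoc1 q, Hq_swapUY q] at h
  -- F4: submodularity with middle Y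
  have F4 : H q cY + H q (fun a => (cXY a, cU a))
      ≤ H q cXY + H q (fun a => (cY a, cU a)) := by
    have h := H_submod hq cX cY cU
    rwa [Hq_assoc2 q] at h
  -- F5: monotonicity
  have F5 : H q (fun a => (cY a, cU a)) ≤ H q (fun a => (cXY a, cU a)) := by
    have h := H_mono hq.1 cX (fun a : X × Y × U => (cY a, cU a))
    rwa [Hq_assoc2 q] at h
  -- F6: submodularity with middle X
  have F6 : H q cX + H q (fun a => (cXY a, cU a))
      ≤ H q cXY + H q (fun a => (cX a, cU a)) := by
    have h := H_submod hq cY cX cU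
    rwa [Hq_assoc3 q, Hq_swapYX q] at h
  -- F7: monotonicity
  have F7 : H q (fun a => (cX a, cU a)) ≤ H q (fun a => (cXY a, cU a)) := by
    have h := H_mono hq.1 cY (fun a : X × Y × U => (cX a, cU a))
    rwa [Hq_assoc3 q] at h
  have T4 : H q cXY = H p (fun z : X × Y => (Prod.snd z, Prod.fst z)) := by
    rw [← Hq_swapYX q]
    exact aux_H_comp ha (fun z : X × Y => (Prod.snd z, Prod.fst z))
  refine ⟨?_, ?_, ?_, ?_, ?_, ?_, ?_⟩ <;> simp only [I2, Hc]
  · linarith only [F1]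
  · linarith only [F2]
  · linarith only [F3, T1, T2, T3]
  · linarith only [F4]
  · linarith only [F5, T2, T3]
  · linarith only [F6]
  · linarith only [F7, T1, T4]

end Subset

section Det
variable {X Y U : Type} [Fintype X] [Fintype Y] [Fintype U]

/-- joint pmf where `U = k(X,Y)` deterministically -/
def qdet (p : X × Y → ℝ) (k : X × Y → U) : X × Y × U → ℝ :=
  fun a => if cU a = k (cXY a) then p (cXY a) else 0

lemma sum_triple {W : Type} [Fintype W] (f : X × Y × W → ℝ) :
    ∑ a, f a = ∑ x, ∑ y, ∑ w, f (x, (y, w)) := by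
  rw [Fintype.sum_prod_type]
  exact Finset.sum_congr rfl fun x _ => Fintype.sum_prod_type _

lemma qdet_marg (p : X × Y → ℝ) (k : X × Y → U) (x : X) (y : Y) :
    ∑ u, qdet p k (x, y, u) = p (x, y) := by
  simp only [qdet, cU, cXY]
  exact (Finset.sum_ite_eq' Finset.univ (k (x, y)) (fun _ => p (x, y))).trans (if_pos (Finset.mem_univ _))

lemma qdet_isAux {p : X × Y → ℝ} (hp : IsPMF p) (k : X × Y → U) : IsAux p (qdet p k) := by
  refine ⟨⟨fun a => ?_, ?_⟩, fun x y => qdet_marg p k x y⟩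
  · rw [qdet]; split
    · exact hp.1 _
    · exact le_refl 0
  · rw [sum_triple (qdet p k)]
    rw [Finset.sum_congr rfl fun x (_ : x ∈ Finset.univ) =>
      Finset.sum_congr rfl fun y (_ : y ∈ Finset.univ) => qdet_marg p k x y]
    rw [← Fintype.sum_prod_type]
    exact hp.2

lemma qdet_dist (p : X × Y → ℝ) (k : X × Y → U) {β : Type} [Fintype β]
    (f : X × Y × U → β) (c : β) :
    dist (qdet p k) f c = dist p (fun z => f (z.1, (z.2, k z))) c := by
  simp only [dist, qdet, cU, cXY]
  rw [sum_triple]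
  rw [Fintype.sum_prod_type (f := fun z : X × Y => if f (z.1, (z.2, k z)) = c then p z else 0)]
  refine Finset.sum_congr rfl fun x _ => Finset.sum_congr rfl fun y _ => ?_
  dsimp only
  have key : ∀ u : U, (if f (x, (y, u)) = c then (if u = k (x, y) then p (x, y) else 0) else 0)
      = (if u = k (x, y) then (if f (x, (y, u)) = c then p (x, y) else 0) else 0) := by
    intro u
    by_cases h1 : f (x, (y, u)) = c <;> by_cases h2 : u = k (x, y) <;> simp [h1, h2]
  refine (Finset.sum_congr rfl fun u _ => key u).trans ?_
  have := Finset.sum_ite_eq' Finset.univ (k (x, y))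
    (fun u => if f (x, (y, u)) = c then p (x, y) else 0)
  simp only [Finset.mem_univ, if_true] at this
  rw [this]

lemma qdet_H (p : X × Y → ℝ) (k : X × Y → U) {β : Type} [Fintype β] (f : X × Y × U → β) :
    H (qdet p k) f = H p (fun z => f (z.1, (z.2, k z))) := by
  rw [H, H]
  exact Finset.sum_congr rfl fun b _ => by rw [qdet_dist p k f b]

end Det



section Points
variable {X Y : Type} [Fintype X] [Fintype Y]

lemma inj_diag {β : Type} : Function.Injective (fun b : β => (b, b)) := by
  intro a b h; simpa using congrArg Prod.fst h

lemma inj_pair_fst {β γ : Type} : Function.Injective (fun c : β × γ => (c.1, c)) := by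
  intro a b h; simpa using congrArg Prod.snd h

lemma inj_pair_snd {β γ : Type} : Function.Injective (fun c : β × γ => (c.2, c)) := by
  intro a b h; simpa using congrArg Prod.snd h

lemma inj_pair_self_fst {β γ : Type} : Function.Injective (fun c : β × γ => (c, c.1)) := by
  intro a b h; simpa using congrArg Prod.fst h

lemma inj_pair_self_snd {β γ : Type} : Function.Injective (fun c : β × γ => (c, c.2)) := by
  intro a b h; simpa using congrArg Prod.fst h

lemma inj_swap {β γ : Type} : Function.Injective (fun c : β × γ => (c.2, c.1)) := by
  intro a b h
  simp only [Prod.mk.injEq] at h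
  exact Prod.ext h.2 h.1

lemma H_punit {α : Type} [Fintype α] {p : α → ℝ} (hp : IsPMF p) :
    H p (fun _ => PUnit.unit) = 0 := by
  have hd : dist p (fun _ : α => PUnit.unit) PUnit.unit = 1 := by
    simp [dist, hp.2]
  rw [H]
  simp [hd]

variable {p : X × Y → ℝ}

lemma point_zero (hp : IsPMF p) : ((0:ℝ), (0:ℝ), (0:ℝ)) ∈ MIRegion p := by
  refine ⟨PUnit, inferInstance, qdet p (fun _ => PUnit.unit), qdet_isAux hp _, ?_⟩
  set k : X × Y → PUnit := fun _ => PUnit.unit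
  have h1 : H (qdet p k) cX = H p Prod.fst := qdet_H p k cX
  have h2 : H (qdet p k) cY = H p Prod.snd := qdet_H p k cY
  have h3 : H (qdet p k) cXY = H p (fun a : X × Y => (Prod.fst a, Prod.snd a)) := qdet_H p k cXY
  have hu : H (qdet p k) cU = H p (fun _ => PUnit.unit) := qdet_H p k cU
  have hxu : H (qdet p k) (fun a => (cX a, cU a)) = H p (fun z : X × Y => (Prod.fst z, PUnit.unit)) :=
    qdet_H p k (fun a => (cX a, cU a))
  have hyu : H (qdet p k) (fun a => (cY a, cU a)) = H p (fun z : X × Y => (Prod.snd z, PUnit.unit)) :=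
    qdet_H p k (fun a => (cY a, cU a))
  have hxyu : H (qdet p k) (fun a => (cXY a, cU a))
      = H p (fun z : X × Y => ((Prod.fst z, Prod.snd z), PUnit.unit)) :=
    qdet_H p k (fun a => (cXY a, cU a))
  have ipu : ∀ {β : Type}, Function.Injective (fun b : β => (b, PUnit.unit)) := by
    intro β a b h
    simpa using congrArg Prod.fst h
  have i1 : H p (fun z : X × Y => (Prod.fst z, PUnit.unit)) = H p Prod.fst :=
    H_comp_inj p Prod.fst (g := fun b => (b, PUnit.unit)) ipu
  have i2 : H p (fun z : X × Y => (Prod.snd z, PUnit.unit)) = H p Prod.snd :=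
    H_comp_inj p Prod.snd (g := fun b => (b, PUnit.unit)) ipu
  have i3 : H p (fun z : X × Y => ((Prod.fst z, Prod.snd z), PUnit.unit))
      = H p (fun a : X × Y => (Prod.fst a, Prod.snd a)) :=
    H_comp_inj p (fun a : X × Y => (Prod.fst a, Prod.snd a)) (g := fun b => (b, PUnit.unit)) ipu
  have hu0 : H p (fun _ : X × Y => PUnit.unit) = 0 := H_punit hp
  simp only [Prod.mk.injEq, I2]
  refine ⟨?_, ?_, ?_⟩
  · rw [h1, hu, hxu, i1, hu0]; ring
  · rw [h2, hu, hyu, i2, hu0]; ring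
  · rw [h3, hu, hxyu, i3, hu0]; ring

lemma point_pX (hp : IsPMF p) :
    (H p Prod.fst, I2 p Prod.fst Prod.snd, H p Prod.fst) ∈ MIRegion p := by
  refine ⟨X, inferInstance, qdet p Prod.fst, qdet_isAux hp _, ?_⟩
  set k : X × Y → X := Prod.fst
  have h1 : H (qdet p k) cX = H p Prod.fst := qdet_H p k cX
  have h2 : H (qdet p k) cY = H p Prod.snd := qdet_H p k cY
  have h3 : H (qdet p k) cXY = H p (fun a : X × Y => (Prod.fst a, Prod.snd a)) := qdet_H p k cXY
  have hu : H (qdet p k) cU = H p Prod.fst := qdet_H p k cU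
  have hxu : H (qdet p k) (fun a => (cX a, cU a))
      = H p (fun z : X × Y => (Prod.fst z, Prod.fst z)) := qdet_H p k (fun a => (cX a, cU a))
  have hyu : H (qdet p k) (fun a => (cY a, cU a))
      = H p (fun z : X × Y => (Prod.snd z, Prod.fst z)) := qdet_H p k (fun a => (cY a, cU a))
  have hxyu : H (qdet p k) (fun a => (cXY a, cU a))
      = H p (fun z : X × Y => ((Prod.fst z, Prod.snd z), Prod.fst z)) :=
    qdet_H p k (fun a => (cXY a, cU a))
  have i1 : H p (fun z : X × Y => (Prod.fst z, Prod.fst z)) = H p Prod.fst :=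
    H_comp_inj p Prod.fst inj_diag
  have i2 : H p (fun z : X × Y => (Prod.snd z, Prod.fst z))
      = H p (fun a : X × Y => (Prod.fst a, Prod.snd a)) :=
    H_comp_inj p (fun a : X × Y => (Prod.fst a, Prod.snd a)) inj_swap
  have i3 : H p (fun z : X × Y => ((Prod.fst z, Prod.snd z), Prod.fst z))
      = H p (fun a : X × Y => (Prod.fst a, Prod.snd a)) :=
    H_comp_inj p (fun a : X × Y => (Prod.fst a, Prod.snd a)) inj_pair_self_fst
  simp only [Prod.mk.injEq, I2]
  refine ⟨?_, ?_, ?_⟩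
  · rw [h1, hu, hxu, i1]; ring
  · rw [h2, hu, hyu, i2]; ring
  · rw [h3, hu, hxyu, i3]; ring

lemma point_pY (hp : IsPMF p) :
    (I2 p Prod.fst Prod.snd, H p Prod.snd, H p Prod.snd) ∈ MIRegion p := by
  refine ⟨Y, inferInstance, qdet p Prod.snd, qdet_isAux hp _, ?_⟩
  set k : X × Y → Y := Prod.snd
  have h1 : H (qdet p k) cX = H p Prod.fst := qdet_H p k cX
  have h2 : H (qdet p k) cY = H p Prod.snd := qdet_H p k cY
  have h3 : H (qdet p k) cXY = H p (fun a : X × Y => (Prod.fst a, Prod.snd a)) := qdet_H p k cXY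
  have hu : H (qdet p k) cU = H p Prod.snd := qdet_H p k cU
  have hxu : H (qdet p k) (fun a => (cX a, cU a))
      = H p (fun a : X × Y => (Prod.fst a, Prod.snd a)) := qdet_H p k (fun a => (cX a, cU a))
  have hyu : H (qdet p k) (fun a => (cY a, cU a))
      = H p (fun z : X × Y => (Prod.snd z, Prod.snd z)) := qdet_H p k (fun a => (cY a, cU a))
  have hxyu : H (qdet p k) (fun a => (cXY a, cU a))
      = H p (fun z : X × Y => ((Prod.fst z, Prod.snd z), Prod.snd z)) :=
    qdet_H p k (fun a => (cXY a, cU a))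
  have i2 : H p (fun z : X × Y => (Prod.snd z, Prod.snd z)) = H p Prod.snd :=
    H_comp_inj p Prod.snd inj_diag
  have i3 : H p (fun z : X × Y => ((Prod.fst z, Prod.snd z), Prod.snd z))
      = H p (fun a : X × Y => (Prod.fst a, Prod.snd a)) :=
    H_comp_inj p (fun a : X × Y => (Prod.fst a, Prod.snd a)) inj_pair_self_snd
  simp only [Prod.mk.injEq, I2]
  refine ⟨?_, ?_, ?_⟩
  · rw [h1, hu, hxu]
  · rw [h2, hu, hyu, i2]; ring
  · rw [h3, hu, hxyu, i3]; ring

lemma point_pF (hp : IsPMF p) :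
    (H p Prod.fst, H p Prod.snd, H p (fun a : X × Y => (Prod.fst a, Prod.snd a))) ∈ MIRegion p := by
  refine ⟨X × Y, inferInstance, qdet p (fun z => (Prod.fst z, Prod.snd z)),
    qdet_isAux hp _, ?_⟩
  set k : X × Y → X × Y := fun z => (Prod.fst z, Prod.snd z)
  have h1 : H (qdet p k) cX = H p Prod.fst := qdet_H p k cX
  have h2 : H (qdet p k) cY = H p Prod.snd := qdet_H p k cY
  have h3 : H (qdet p k) cXY = H p (fun a : X × Y => (Prod.fst a, Prod.snd a)) := qdet_H p k cXY
  have hu : H (qdet p k) cU = H p (fun a : X × Y => (Prod.fst a, Prod.snd a)) := qdet_H p k cU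
  have hxu : H (qdet p k) (fun a => (cX a, cU a))
      = H p (fun z : X × Y => (Prod.fst z, (Prod.fst z, Prod.snd z))) :=
    qdet_H p k (fun a => (cX a, cU a))
  have hyu : H (qdet p k) (fun a => (cY a, cU a))
      = H p (fun z : X × Y => (Prod.snd z, (Prod.fst z, Prod.snd z))) :=
    qdet_H p k (fun a => (cY a, cU a))
  have hxyu : H (qdet p k) (fun a => (cXY a, cU a))
      = H p (fun z : X × Y => ((Prod.fst z, Prod.snd z), (Prod.fst z, Prod.snd z))) :=
    qdet_H p k (fun a => (cXY a, cU a))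
  have i1 : H p (fun z : X × Y => (Prod.fst z, (Prod.fst z, Prod.snd z)))
      = H p (fun a : X × Y => (Prod.fst a, Prod.snd a)) :=
    H_comp_inj p (fun a : X × Y => (Prod.fst a, Prod.snd a)) inj_pair_fst
  have i2 : H p (fun z : X × Y => (Prod.snd z, (Prod.fst z, Prod.snd z)))
      = H p (fun a : X × Y => (Prod.fst a, Prod.snd a)) :=
    H_comp_inj p (fun a : X × Y => (Prod.fst a, Prod.snd a)) inj_pair_snd
  have i3 : H p (fun z : X × Y => ((Prod.fst z, Prod.snd z), (Prod.fst z, Prod.snd z)))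
      = H p (fun a : X × Y => (Prod.fst a, Prod.snd a)) :=
    H_comp_inj p (fun a : X × Y => (Prod.fst a, Prod.snd a)) inj_diag
  simp only [Prod.mk.injEq, I2]
  refine ⟨?_, ?_, ?_⟩
  · rw [h1, hu, hxu, i1]; ring
  · rw [h2, hu, hyu, i2]; ring
  · rw [h3, hu, hxyu, i3]; ring

end Points



noncomputable section
open scoped BigOperators Pointwise Classical
set_option linter.unusedSectionVars false

def phi2 (x : ℝ) : ℝ := -(x * Real.logb 2 x)

lemma H_eq_phi2 {α β : Type} [Fintype α] [Fintype β] (p : α → ℝ) (f : α → β) :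
    H p f = ∑ b, phi2 (dist p f b) := rfl

lemma phi2_zero : phi2 0 = 0 := by simp [phi2]

lemma phi2_mul {t x : ℝ} (ht : 0 ≤ t) (hx : 0 ≤ x) :
    phi2 (t * x) = t * phi2 x + x * phi2 t := by
  rcases eq_or_lt_of_le ht with h | h
  · simp [← h, phi2]
  rcases eq_or_lt_of_le hx with h' | h'
  · simp [← h', phi2]
  · rw [phi2, phi2, phi2, Real.logb, Real.logb, Real.logb,
      Real.log_mul (ne_of_gt h) (ne_of_gt h')]
    ring

section Mix
variable {X Y U1 U2 : Type} [Fintype X] [Fintype Y] [Fintype U1] [Fintype U2]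
  {p : X × Y → ℝ} (t : ℝ) (q1 : X × Y × U1 → ℝ) (q2 : X × Y × U2 → ℝ)

def qmix : X × Y × (U1 ⊕ U2) → ℝ :=
  fun a => Sum.elim (fun u => t * q1 (a.1, (a.2.1, u))) (fun u => (1 - t) * q2 (a.1, (a.2.1, u))) a.2.2

variable {t q1 q2}

lemma qmix_isAux (ht0 : 0 ≤ t) (ht1 : t ≤ 1) (h1 : IsAux p q1) (h2 : IsAux p q2) :
    IsAux p (qmix t q1 q2) := by
  have marg : ∀ x y, (∑ w, qmix t q1 q2 (x, y, w)) = p (x, y) := by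
    intro x y
    rw [Fintype.sum_sum_type]
    simp only [qmix, Sum.elim_inl, Sum.elim_inr]
    rw [← Finset.mul_sum, ← Finset.mul_sum, h1.2 x y, h2.2 x y]
    ring
  refine ⟨⟨fun a => ?_, ?_⟩, marg⟩
  · obtain ⟨x, y, w⟩ := a
    rcases w with u | u
    · exact mul_nonneg ht0 (h1.1.1 _)
    · exact mul_nonneg (by linarith) (h2.1.1 _)
  · rw [sum_triple (qmix t q1 q2)]
    rw [Finset.sum_congr rfl fun x (_ : x ∈ Finset.univ) =>
      Finset.sum_congr rfl fun y (_ : y ∈ Finset.univ) => marg x y]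
    rw [Finset.sum_congr rfl fun x (_ : x ∈ Finset.univ) =>
      Finset.sum_congr rfl fun y (_ : y ∈ Finset.univ) => (h1.2 x y).symm]
    rw [← sum_triple q1]
    exact h1.1.2

variable {β : Type} [Fintype β]

lemma qmix_dist_inl (F : X × Y → β) (b : β) (u1 : U1) :
    dist (qmix t q1 q2) (fun a => (F (cXY a), cU a)) (b, Sum.inl u1)
      = t * dist q1 (fun a => (F (cXY a), cU a)) (b, u1) := by
  simp only [dist, cXY, cU]
  rw [sum_triple]
  rw [sum_triple]
  rw [Finset.mul_sum]
  refine Finset.sum_congr rfl fun x _ => ?_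
  rw [Finset.mul_sum]
  refine Finset.sum_congr rfl fun y _ => ?_
  dsimp only
  rw [Fintype.sum_sum_type]
  simp [qmix, Finset.mul_sum, mul_ite]

lemma qmix_dist_inr (F : X × Y → β) (b : β) (u2 : U2) :
    dist (qmix t q1 q2) (fun a => (F (cXY a), cU a)) (b, Sum.inr u2)
      = (1 - t) * dist q2 (fun a => (F (cXY a), cU a)) (b, u2) := by
  simp only [dist, cXY, cU]
  rw [sum_triple]
  rw [sum_triple]
  rw [Finset.mul_sum]
  refine Finset.sum_congr rfl fun x _ => ?_
  rw [Finset.mul_sum]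
  refine Finset.sum_congr rfl fun y _ => ?_
  dsimp only
  rw [Fintype.sum_sum_type]
  simp [qmix, Finset.mul_sum, mul_ite]

lemma qmix_H_pair (ht0 : 0 ≤ t) (ht1 : t ≤ 1) (h1 : IsAux p q1) (h2 : IsAux p q2)
    (F : X × Y → β) :
    H (qmix t q1 q2) (fun a => (F (cXY a), cU a))
      = t * H q1 (fun a => (F (cXY a), cU a)) + (1 - t) * H q2 (fun a => (F (cXY a), cU a))
        + phi2 t + phi2 (1 - t) := by
  rw [H_eq_phi2, H_eq_phi2, H_eq_phi2]
  rw [Fintype.sum_prod_type]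
  rw [Finset.sum_congr rfl fun b (_ : b ∈ Finset.univ) => Fintype.sum_sum_type
    (fun w : U1 ⊕ U2 => phi2 (dist (qmix t q1 q2) (fun a => (F (cXY a), cU a)) (b, w)))]
  have e1 : ∀ b u1, phi2 (dist (qmix t q1 q2) (fun a => (F (cXY a), cU a)) (b, Sum.inl u1))
      = t * phi2 (dist q1 (fun a => (F (cXY a), cU a)) (b, u1))
        + dist q1 (fun a => (F (cXY a), cU a)) (b, u1) * phi2 t := by
    intro b u1
    rw [qmix_dist_inl F b u1, phi2_mul ht0 (dist_nonneg h1.1.1 _ _)]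
  have e2 : ∀ b u2, phi2 (dist (qmix t q1 q2) (fun a => (F (cXY a), cU a)) (b, Sum.inr u2))
      = (1 - t) * phi2 (dist q2 (fun a => (F (cXY a), cU a)) (b, u2))
        + dist q2 (fun a => (F (cXY a), cU a)) (b, u2) * phi2 (1 - t) := by
    intro b u2
    rw [qmix_dist_inr F b u2, phi2_mul (by linarith) (dist_nonneg h2.1.1 _ _)]
  rw [Finset.sum_congr rfl fun b (_ : b ∈ Finset.univ) => congrArg₂ (· + ·)
    (Finset.sum_congr rfl fun u1 (_ : u1 ∈ Finset.univ) => e1 b u1)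
    (Finset.sum_congr rfl fun u2 (_ : u2 ∈ Finset.univ) => e2 b u2)]
  have sd1 : ∑ b, ∑ u1, dist q1 (fun a => (F (cXY a), cU a)) (b, u1) = 1 := by
    rw [← Fintype.sum_prod_type]
    rw [sum_dist]
    exact h1.1.2
  have sd2 : ∑ b, ∑ u2, dist q2 (fun a => (F (cXY a), cU a)) (b, u2) = 1 := by
    rw [← Fintype.sum_prod_type]
    rw [sum_dist]
    exact h2.1.2
  have expand : ∑ b, (∑ u1, (t * phi2 (dist q1 (fun a => (F (cXY a), cU a)) (b, u1))
        + dist q1 (fun a => (F (cXY a), cU a)) (b, u1) * phi2 t)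
      + ∑ u2, ((1 - t) * phi2 (dist q2 (fun a => (F (cXY a), cU a)) (b, u2))
        + dist q2 (fun a => (F (cXY a), cU a)) (b, u2) * phi2 (1 - t)))
      = t * (∑ b, ∑ u1, phi2 (dist q1 (fun a => (F (cXY a), cU a)) (b, u1)))
        + (∑ b, ∑ u1, dist q1 (fun a => (F (cXY a), cU a)) (b, u1)) * phi2 t
        + (1 - t) * (∑ b, ∑ u2, phi2 (dist q2 (fun a => (F (cXY a), cU a)) (b, u2)))
        + (∑ b, ∑ u2, dist q2 (fun a => (F (cXY a), cU a)) (b, u2)) * phi2 (1 - t) := by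
    simp only [Finset.sum_add_distrib, Finset.mul_sum, Finset.sum_mul]
    ring
  rw [expand, sd1, sd2]
  rw [Fintype.sum_prod_type (f := fun y : β × U1 => phi2 (dist q1 (fun a => (F (cXY a), cU a)) y))]
  rw [Fintype.sum_prod_type (f := fun y : β × U2 => phi2 (dist q2 (fun a => (F (cXY a), cU a)) y))]
  ring

lemma inj_punit_pair {W : Type} : Function.Injective (fun u : W => (PUnit.unit, u)) := by
  intro a b h
  simpa using congrArg Prod.snd h

lemma qmix_H_U (ht0 : 0 ≤ t) (ht1 : t ≤ 1) (h1 : IsAux p q1) (h2 : IsAux p q2) :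
    H (qmix t q1 q2) cU = t * H q1 cU + (1 - t) * H q2 cU + phi2 t + phi2 (1 - t) := by
  have h := qmix_H_pair (β := PUnit) ht0 ht1 h1 h2 (fun _ => PUnit.unit)
  have c0 : H (qmix t q1 q2) (fun a => (PUnit.unit, cU a)) = H (qmix t q1 q2) cU :=
    H_comp_inj (qmix t q1 q2) cU inj_punit_pair
  have c1 : H q1 (fun a => (PUnit.unit, cU a)) = H q1 cU :=
    H_comp_inj q1 cU inj_punit_pair
  have c2 : H q2 (fun a => (PUnit.unit, cU a)) = H q2 cU :=
    H_comp_inj q2 cU inj_punit_pair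
  rw [← c0, ← c1, ← c2]
  exact h

lemma qmix_I2 (ht0 : 0 ≤ t) (ht1 : t ≤ 1) (h1 : IsAux p q1) (h2 : IsAux p q2)
    (F : X × Y → β) :
    I2 (qmix t q1 q2) (fun a => F (cXY a)) cU
      = t * I2 q1 (fun a => F (cXY a)) cU + (1 - t) * I2 q2 (fun a => F (cXY a)) cU := by
  have hmix : IsAux p (qmix t q1 q2) := qmix_isAux ht0 ht1 h1 h2
  have hF : H (qmix t q1 q2) (fun a => F (cXY a)) = H p F := aux_H_comp hmix F
  have hF1 : H q1 (fun a => F (cXY a)) = H p F := aux_H_comp h1 F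
  have hF2 : H q2 (fun a => F (cXY a)) = H p F := aux_H_comp h2 F
  have hU := qmix_H_U ht0 ht1 h1 h2
  have hP := qmix_H_pair ht0 ht1 h1 h2 F
  simp only [I2]
  rw [hF, hF1, hF2, hU, hP]
  ring

end Mix

lemma MIRegion_convex {X Y : Type} [Fintype X] [Fintype Y] (p : X × Y → ℝ) :
    Convex ℝ (MIRegion p) := by
  intro v1 hv1 v2 hv2 a b ha hb hab
  obtain ⟨U1, i1, q1, h1, rfl⟩ := hv1
  obtain ⟨U2, i2, q2, h2, rfl⟩ := hv2
  have hb' : b = 1 - a := by linarith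
  have ha1 : a ≤ 1 := by linarith
  subst hb'
  refine ⟨U1 ⊕ U2, inferInstance, qmix a q1 q2, qmix_isAux ha ha1 h1 h2, ?_⟩
  have eX : I2 (qmix a q1 q2) cX cU = a * I2 q1 cX cU + (1 - a) * I2 q2 cX cU :=
    qmix_I2 ha ha1 h1 h2 Prod.fst
  have eY : I2 (qmix a q1 q2) cY cU = a * I2 q1 cY cU + (1 - a) * I2 q2 cY cU :=
    qmix_I2 ha ha1 h1 h2 Prod.snd
  have eXY : I2 (qmix a q1 q2) cXY cU = a * I2 q1 cXY cU + (1 - a) * I2 q2 cXY cU :=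
    qmix_I2 ha ha1 h1 h2 (fun z => z)
  simp only [Prod.smul_mk, Prod.mk_add_mk, smul_eq_mul, Prod.mk.injEq]
  exact ⟨eX.symm, eY.symm, eXY.symm⟩

end


noncomputable section
open scoped BigOperators Pointwise Classical
set_option linter.unusedSectionVars false
set_option maxHeartbeats 1000000

section Main
variable {X Y : Type} [Fintype X] [Fintype Y]

lemma Hswap (p : X × Y → ℝ) :
    H p (fun a : X × Y => (Prod.snd a, Prod.fst a)) = H p (fun a : X × Y => (Prod.fst a, Prod.snd a)) :=
  H_comp_inj p (fun a : X × Y => (Prod.fst a, Prod.snd a)) inj_swap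

lemma smul_MIRegion {p : X × Y → ℝ} (hp : IsPMF p) {u : ℝ × ℝ × ℝ} (hu : u ∈ MIRegion p)
    {l : ℝ} (hl0 : 0 ≤ l) (hl1 : l ≤ 1) : l • u ∈ MIRegion p := by
  have h := MIRegion_convex p hu (point_zero hp) hl0 (by linarith : (0:ℝ) ≤ 1 - l)
    (by ring : l + (1 - l) = 1)
  have e : l • u + (1 - l) • (((0:ℝ), (0:ℝ), (0:ℝ)) : ℝ × ℝ × ℝ) = l • u := by
    obtain ⟨u1, u2, u3⟩ := u
    simp [Prod.ext_iff]
  rwa [e] at h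

/-- the hard direction: LHS ⊆ 𝓘 + diag -/
lemma main_fwd {p : X × Y → ℝ} (hp : IsPMF p) {v u : ℝ × ℝ × ℝ}
    (hu : u ∈ MIRegion p) (hw1 : v.1 ≤ u.1) (hw2 : v.2.1 ≤ u.2.1) (hw3 : u.2.2 ≤ v.2.2)
    (hvO : v ∈ OuterRegion p) :
    v ∈ MIRegion p + { w : ℝ × ℝ × ℝ | ∃ t ≤ (0:ℝ), w = (t, t, t) } := by
  obtain ⟨u1, u2, u3⟩ := u
  obtain ⟨v1, v2, v3⟩ := v
  simp only at hw1 hw2 hw3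
  have huO := MIRegion_subset_Outer p hp hu
  obtain ⟨hu1, hu2, huI, hua0, huaA, hub0, hubB⟩ := huO
  obtain ⟨hv1, hv2, hvI, hva0, hvaA, hvb0, hvbB⟩ := hvO
  simp only at hu1 hu2 huI hua0 huaA hub0 hubB hv1 hv2 hvI hva0 hvaA hvb0 hvbB
  set hx : ℝ := H p Prod.fst with hhx
  set hy : ℝ := H p Prod.snd with hhy
  set hxy : ℝ := H p (fun a : X × Y => (Prod.fst a, Prod.snd a)) with hhxy
  have eI : I2 p Prod.fst Prod.snd = hx + hy - hxy := rfl
  have eA : Hc p Prod.fst Prod.snd = hxy - hy := rfl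
  have eB : Hc p Prod.snd Prod.fst = hxy - hx := by
    rw [Hc, Hswap p]
  rw [eI] at huI hvI
  rw [eA] at huaA hvaA
  rw [eB] at hubB hvbB
  -- abbreviations
  have hA0 : 0 ≤ hxy - hy := le_trans hva0 hvaA
  have hB0 : 0 ≤ hxy - hx := le_trans hvb0 hvbB
  have hauav : u3 - u2 ≤ v3 - v2 := by linarith
  have hbubv : u3 - u1 ≤ v3 - v1 := by linarith
  have hcvcu : v1 + v2 - v3 ≤ u1 + u2 - u3 := by linarith
  -- the IVT function
  set P : ℝ → ℝ := fun l => ((v3 - v2) - l * (u3 - u2)) / (hxy - hy) with hP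
  set Q : ℝ → ℝ := fun l => ((v3 - v1) - l * (u3 - u1)) / (hxy - hx) with hQ
  set φ : ℝ → ℝ := fun l => l + max (P l) (Q l) with hφ
  have hc1 : Continuous P := (continuous_const.sub (continuous_id.mul continuous_const)).div_const _
  have hc2 : Continuous Q := (continuous_const.sub (continuous_id.mul continuous_const)).div_const _
  have hcont : Continuous φ := continuous_id.add (hc1.max hc2)
  have hφ0 : φ 0 ≤ 1 := by
    have e1 : P 0 ≤ 1 := by
      rw [hP]
      rcases eq_or_lt_of_le hA0 with h | h
      · simp [← h]
      · simp only []
        rw [div_le_one h]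
        linarith
    have e2 : Q 0 ≤ 1 := by
      rw [hQ]
      rcases eq_or_lt_of_le hB0 with h | h
      · simp [← h]
      · simp only []
        rw [div_le_one h]
        linarith
    have : max (P 0) (Q 0) ≤ 1 := max_le e1 e2
    rw [hφ]
    simpa using this
  have hφ1 : 1 ≤ φ 1 := by
    have e1 : 0 ≤ P 1 := by
      rw [hP]
      exact div_nonneg (by linarith) hA0
    have : 0 ≤ max (P 1) (Q 1) := le_trans e1 (le_max_left _ _)
    rw [hφ]
    simpa using this
  obtain ⟨l, hlmem, hlval⟩ := intermediate_value_Icc (by norm_num : (0:ℝ) ≤ 1)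
    hcont.continuousOn (Set.mem_Icc.mpr ⟨hφ0, hφ1⟩)
  obtain ⟨hl0, hl1⟩ := Set.mem_Icc.mp hlmem
  -- weights
  set Pl : ℝ := P l with hPl
  set Ql : ℝ := Q l with hQl
  set dl : ℝ := min Pl Ql with hdl
  have hkey3 : l + Pl + Ql - dl = 1 := by
    have hmm : max Pl Ql + min Pl Ql = Pl + Ql := max_add_min Pl Ql
    have : l + max Pl Ql = 1 := hlval
    linarith
  have hP0 : 0 ≤ Pl := by
    rw [hPl, hP]
    refine div_nonneg ?_ hA0
    have := mul_le_mul_of_nonneg_right hl1 hua0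
    linarith only [this, hauav]
  have hQ0 : 0 ≤ Ql := by
    rw [hQl, hQ]
    refine div_nonneg ?_ hB0
    have := mul_le_mul_of_nonneg_right hl1 hub0
    linarith only [this, hbubv]
  have hd0 : 0 ≤ dl := le_min hP0 hQ0
  have hbc0 : 0 ≤ Pl - dl := by
    have := min_le_left Pl Ql
    linarith
  have hgc0 : 0 ≤ Ql - dl := by
    have := min_le_right Pl Ql
    linarith
  have key1 : Pl * (hxy - hy) = (v3 - v2) - l * (u3 - u2) := by
    rcases eq_or_lt_of_le hA0 with h | h
    · have hav0 : v3 - v2 = 0 := le_antisymm (by linarith) hva0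
      have hau0 : u3 - u2 = 0 := le_antisymm (by linarith) hua0
      rw [← h, hav0, hau0]
      ring
    · rw [hPl, hP]
      field_simp
  have key2 : Ql * (hxy - hx) = (v3 - v1) - l * (u3 - u1) := by
    rcases eq_or_lt_of_le hB0 with h | h
    · have hbv0 : v3 - v1 = 0 := le_antisymm (by linarith) hvb0
      have hbu0 : u3 - u1 = 0 := le_antisymm (by linarith) hub0
      rw [← h, hbv0, hbu0]
      ring
    · rw [hQl, hQ]
      field_simp
  clear_value Pl Ql dl
  -- the convex combination
  set w : Fin 4 → ℝ := ![l, Pl - dl, Ql - dl, dl] with hwdef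
  set z : Fin 4 → ℝ × ℝ × ℝ := ![(u1, u2, u3), (hx, hx + hy - hxy, hx),
    (hx + hy - hxy, hy, hy), (hx, hy, hxy)] with hzdef
  have hz0 : z 0 ∈ MIRegion p := hu
  have hz1 : z 1 ∈ MIRegion p := by
    have := point_pX (p := p) hp
    rw [eI] at this
    simpa [hzdef] using this
  have hz2 : z 2 ∈ MIRegion p := by
    have := point_pY (p := p) hp
    rw [eI] at this
    simpa [hzdef] using this
  have hz3 : z 3 ∈ MIRegion p := by
    have := point_pF (p := p) hp
    simpa [hzdef] using this
  have hwsum : ∑ i, w i = 1 := by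
    simp [hwdef, Fin.sum_univ_four]
    linarith
  have hwnn : ∀ i ∈ Finset.univ, 0 ≤ w i := by
    intro i _
    fin_cases i <;> simp [hwdef] <;> linarith
  have hmem : (∑ i, w i • z i) ∈ MIRegion p :=
    (MIRegion_convex p).sum_mem hwnn hwsum (fun i _ => by fin_cases i <;> assumption)
  set s : ℝ := (l * u3 + (Pl - dl) * hx + (Ql - dl) * hy + dl * hxy) - v3 with hs
  have hsumval : (∑ i, w i • z i)
      = (l * u1 + (Pl - dl) * hx + (Ql - dl) * (hx + hy - hxy) + dl * hx,
         l * u2 + (Pl - dl) * (hx + hy - hxy) + (Ql - dl) * hy + dl * hy,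
         l * u3 + (Pl - dl) * hx + (Ql - dl) * hy + dl * hxy) := by
    rw [Fin.sum_univ_four]
    simp [hwdef, hzdef, Prod.ext_iff]
  have hG1 : (l * u3 + (Pl - dl) * hx + (Ql - dl) * hy + dl * hxy)
      - (l * u1 + (Pl - dl) * hx + (Ql - dl) * (hx + hy - hxy) + dl * hx) = v3 - v1 := by
    linear_combination key2
  have hG2 : (l * u3 + (Pl - dl) * hx + (Ql - dl) * hy + dl * hxy)
      - (l * u2 + (Pl - dl) * (hx + hy - hxy) + (Ql - dl) * hy + dl * hy) = v3 - v2 := by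
    linear_combination key1
  have hEc : (l * u1 + (Pl - dl) * hx + (Ql - dl) * (hx + hy - hxy) + dl * hx)
      + (l * u2 + (Pl - dl) * (hx + hy - hxy) + (Ql - dl) * hy + dl * hy)
      - (l * u3 + (Pl - dl) * hx + (Ql - dl) * hy + dl * hxy)
      = l * (u1 + u2 - u3) + (1 - l) * (hx + hy - hxy) := by
    linear_combination (hx + hy - hxy) * hkey3
  have hEs : s = l * (u1 + u2 - u3) + (1 - l) * (hx + hy - hxy) - (v1 + v2 - v3) := by
    rw [hs]
    linarith only [hEc, hG1, hG2]
  have hs0 : 0 ≤ s := by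
    have t1 : l * (v1 + v2 - v3) ≤ l * (u1 + u2 - u3) :=
      mul_le_mul_of_nonneg_left hcvcu hl0
    have t2 : (1 - l) * (v1 + v2 - v3) ≤ (1 - l) * (hx + hy - hxy) :=
      mul_le_mul_of_nonneg_left hvI (by linarith only [hl1])
    rw [hEs]
    linarith only [t1, t2]
  rw [Set.mem_add]
  refine ⟨∑ i, w i • z i, hmem, (-s, -s, -s), ⟨-s, by linarith, rfl⟩, ?_⟩
  rw [hsumval]
  simp only [Prod.mk_add_mk, Prod.mk.injEq]
  refine ⟨by linarith [hG1, hG2], by linarith [hG1, hG2], by rw [hs]; ring⟩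

theorem stmt18' (p : X × Y → ℝ) (hp : IsPMF p) :
    (MIRegion p + Set.Iic (0:ℝ) ×ˢ Set.Iic (0:ℝ) ×ˢ Set.Ici (0:ℝ)) ∩ OuterRegion p =
      (MIRegion p + { w : ℝ × ℝ × ℝ | ∃ t ≤ (0:ℝ), w = (t, t, t) }) ∩
        (Set.Ici (0:ℝ) ×ˢ Set.Ici (0:ℝ) ×ˢ (Set.univ : Set ℝ)) := by
  ext v
  constructor
  · rintro ⟨hvsum, hvO⟩
    rw [Set.mem_add] at hvsum
    obtain ⟨u, hu, ww, hww, huw⟩ := hvsum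
    rw [Set.mem_prod] at hww
    obtain ⟨hw1, hww2⟩ := hww
    rw [Set.mem_prod] at hww2
    obtain ⟨hw2, hw3⟩ := hww2
    rw [Set.mem_Iic] at hw1 hw2
    rw [Set.mem_Ici] at hw3
    constructor
    · refine main_fwd hp hu ?_ ?_ ?_ hvO
      · rw [← huw]; simp only [Prod.fst_add]; linarith
      · rw [← huw]; simp only [Prod.snd_add, Prod.fst_add]; linarith
      · rw [← huw]; simp only [Prod.snd_add]; linarith
    · exact ⟨hvO.1, hvO.2.1, trivial⟩
  · rintro ⟨hvsum, hvP⟩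
    rw [Set.mem_add] at hvsum
    obtain ⟨u, hu, ww, ⟨τ, hτ, rfl⟩, huw⟩ := hvsum
    obtain ⟨u1, u2, u3⟩ := u
    obtain ⟨v1, v2, v3⟩ := v
    simp only [Prod.mk_add_mk, Prod.mk.injEq] at huw
    obtain ⟨e1, e2, e3⟩ := huw
    obtain ⟨hv1', hv2', -⟩ := hvP
    rw [Set.mem_Ici] at hv1' hv2'
    simp only at hv1' hv2'
    have huO := MIRegion_subset_Outer p hp hu
    obtain ⟨hu1, hu2, huI, hua0, huaA, hub0, hubB⟩ := huO
    simp only at hu1 hu2 huI hua0 huaA hub0 hubB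
    constructor
    · -- v ∈ MIRegion + Iic×Iic×Ici
      rcases eq_or_lt_of_le (le_trans hu2 (by linarith : u2 ≤ u3)) with h3 | h3
      · -- u3 = 0 hence u1 = u2 = 0 and τ = 0
        have hu10 : u1 = 0 := le_antisymm (by linarith) hu1
        have hu20 : u2 = 0 := le_antisymm (by linarith) hu2
        have hτ0 : τ = 0 := le_antisymm hτ (by rw [← e1, hu10] at hv1'; linarith)
        rw [Set.mem_add]
        refine ⟨(u1, u2, u3), hu, (0, 0, 0), ?_, ?_⟩
        · rw [Set.mem_prod]
          refine ⟨Set.mem_Iic.mpr le_rfl, ?_⟩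
          rw [Set.mem_prod]
          exact ⟨Set.mem_Iic.mpr le_rfl, Set.mem_Ici.mpr le_rfl⟩
        · simp only [Prod.mk_add_mk, Prod.mk.injEq]
          refine ⟨by linarith, by linarith, by linarith⟩
      · -- u3 > 0
        set lam : ℝ := (u3 + τ) / u3 with hlam
        have hu3ne : u3 ≠ 0 := ne_of_gt h3
        have hlamu3 : lam * u3 = u3 + τ := div_mul_cancel₀ _ hu3ne
        have hv30 : 0 ≤ u3 + τ := by linarith
        have hlam0 : 0 ≤ lam := div_nonneg hv30 (le_of_lt h3)
        have hlam1 : lam ≤ 1 := by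
          rw [hlam, div_le_one h3]
          linarith
        have hmem : lam • ((u1, u2, u3) : ℝ × ℝ × ℝ) ∈ MIRegion p :=
          smul_MIRegion hp hu hlam0 hlam1
        rw [Set.mem_add]
        refine ⟨lam • ((u1, u2, u3) : ℝ × ℝ × ℝ),
          hmem, (v1 - lam * u1, v2 - lam * u2, v3 - lam * u3), ?_, ?_⟩
        · have t1 : (1 - lam) * u1 ≤ (1 - lam) * u3 :=
            mul_le_mul_of_nonneg_left (by linarith) (by linarith)
          have t2 : (1 - lam) * u2 ≤ (1 - lam) * u3 :=
            mul_le_mul_of_nonneg_left (by linarith) (by linarith)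
          rw [Set.mem_prod]
          constructor
          · rw [Set.mem_Iic]
            simp only
            linarith only [t1, hlamu3, e1, hτ]
          rw [Set.mem_prod]
          constructor
          · rw [Set.mem_Iic]
            simp only
            linarith only [t2, hlamu3, e2, hτ]
          · rw [Set.mem_Ici]
            simp only
            linarith only [hlamu3, e3]
        · simp only [Prod.smul_mk, smul_eq_mul, Prod.mk_add_mk, Prod.mk.injEq]
          refine ⟨by ring, by ring, by ring⟩
    · -- v ∈ OuterRegion
      refine ⟨hv1', hv2', ?_, ?_, ?_, ?_, ?_⟩ <;> simp only
      · linarith only [e1, e2, e3, hτ, huI]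
      · linarith only [e2, e3, hua0]
      · linarith only [e2, e3, huaA]
      · linarith only [e1, e3, hub0]
      · linarith only [e1, e3, hubB]

end Main
end


/-- Maximal interaction information `G_NNI(X; Y)`. -/
def GNNI {X Y : Type} [Fintype X] [Fintype Y] (p : X × Y → ℝ) : ℝ :=
  sSup { r | ∃ (U : Type) (_ : Fintype U) (q : X × Y × U → ℝ), IsAux p q ∧
      r = Ic q cX cY cU - I2 p Prod.fst Prod.snd }

/-- Asymmetric private interaction information `G_PNI(X → Y)`. -/
def GPNI {X Y : Type} [Fintype X] [Fintype Y] (p : X × Y → ℝ) : ℝ :=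
  sSup { r | ∃ (U : Type) (_ : Fintype U) (q : X × Y × U → ℝ), IsAux p q ∧
      Indep q cU cX ∧ r = Ic q cX cY cU - I2 p Prod.fst Prod.snd }

/-- Symmetric private interaction information `G_PPI(X; Y)`. -/
def GPPI {X Y : Type} [Fintype X] [Fintype Y] (p : X × Y → ℝ) : ℝ :=
  sSup { r | ∃ (U : Type) (_ : Fintype U) (q : X × Y × U → ℝ), IsAux p q ∧
      Indep q cU cX ∧ Indep q cU cY ∧ r = Ic q cX cY cU - I2 p Prod.fst Prod.snd }


/-- the set identity
`(𝓘_{XY} + (−∞,0] × (−∞,0] × [0,∞)) ∩ 𝓘ᵒ_{XY}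
  = (𝓘_{XY} + {(t,t,t) : t ≤ 0}) ∩ ([0,∞) × [0,∞) × ℝ)`,
where `+` is the Minkowski sum. -/
theorem stmt18 {X Y : Type} [Fintype X] [Fintype Y] (p : X × Y → ℝ) (hp : IsPMF p) :
    (MIRegion p + Set.Iic (0:ℝ) ×ˢ Set.Iic (0:ℝ) ×ˢ Set.Ici (0:ℝ)) ∩ OuterRegion p =
      (MIRegion p + { w : ℝ × ℝ × ℝ | ∃ t ≤ (0:ℝ), w = (t, t, t) }) ∩
        (Set.Ici (0:ℝ) ×ˢ Set.Ici (0:ℝ) ×ˢ (Set.univ : Set ℝ)) := by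
  exact stmt18' p hp

end GW
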